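/- For every a ∈ F_{3^n}^×, the point P₃ = (a^{1/3}, a^{1/3}) lies on the elliptic curve E: y² = x³ + x² − a over F_{3^n} and has order exactly 3. -/

import Mathlib

open WeierstrassCurve

/-- The curve `y² = x³ + x² - a` over a field. -/
def E3 {F : Type*} [Field F] (a : F) : WeierstrassCurve.Affine F :=
  { a₁ := 0, a₂ := 1, a₃ := 0, a₄ := 0, a₆ := -a }

open Classical in
/-- For every `a ∈ 𝔽_{3^n}ˣ`, the point `P₃ = (a^{1/3}, a^{1/3})` lies on
`E : y² = x³ + x² - a` over `𝔽_{3^n}` and has order exactly 3. -/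
theorem order_three_point (n : ℕ) (a c : GaloisField 3 n) (ha : a ≠ 0) (hc : c ^ 3 = a) :
    (E3 a).Equation c c ∧
    ∃ h : (E3 a).Nonsingular c c, addOrderOf (Affine.Point.some c c h) = 3 := by
  haveI : Fact (Nat.Prime 3) := ⟨by norm_num⟩
  have h3 : (3 : GaloisField 3 n) = 0 := by
    exact_mod_cast CharP.cast_eq_zero (GaloisField 3 n) 3
  have h2 : (2 : GaloisField 3 n) = -1 := by linear_combination h3
  have hc0 : c ≠ 0 := by
    intro h; apply ha; rw [← hc, h]; ring
  have heq : (E3 a).Equation c c := by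
    rw [Affine.equation_iff]
    simp only [E3]
    linear_combination -hc
  have hne : c ≠ (E3 a).negY c c := by
    simp only [Affine.negY, E3]
    intro h
    apply hc0
    have : 2 * c = 0 := by linear_combination h
    rw [h2] at this
    simpa using this
  refine ⟨heq, ?_⟩
  have hns : (E3 a).Nonsingular c c := by
    rw [Affine.nonsingular_iff]
    refine ⟨heq, Or.inr ?_⟩
    simpa only [Affine.negY, E3] using hne
  refine ⟨hns, ?_⟩
  have hslope : (E3 a).slope c c c c = 1 := by
    rw [Affine.slope_of_Y_ne rfl hne, div_eq_one_iff_eq (sub_ne_zero.mpr hne)]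
    simp only [Affine.negY, E3]
    linear_combination c ^ 2 * h3
  have hx : (E3 a).addX c c ((E3 a).slope c c c c) = c := by
    rw [hslope]; simp only [Affine.addX, E3]; linear_combination -c * h3
  have hy2 : (E3 a).negAddY c c c ((E3 a).slope c c c c) = c := by
    rw [Affine.negAddY, hx, hslope]; ring
  have key : Affine.Point.some c c hns + Affine.Point.some c c hns = -Affine.Point.some c c hns := by
    rw [Affine.Point.add_self_of_Y_ne' hne]
    congr 1
    simp only [hx, hy2]
  have h3P : (3 : ℕ) • Affine.Point.some c c hns = 0 := by
    have e : (3 : ℕ) • Affine.Point.some c c hns = 2 • Affine.Point.some c c hns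
        + 1 • Affine.Point.some c c hns := by
      rw [← add_nsmul]
    rw [e, two_nsmul, one_nsmul, key]
    exact neg_add_cancel _
  exact addOrderOf_eq_prime h3P (Affine.Point.some_ne_zero hns)
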